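/- Stein's lemma. Let N be a standard Gaussian random variable and let h : ℝ → [0,1] be a continuous function. Define f : ℝ → ℝ by f(x) = e^{x²/2} ∫_{−∞}^x (h(a) − E[h(N)]) e^{−a²/2} da. Then f is of class C¹, |f(x)| ≤ √(π/2) and |f'(x)| ≤ 2 for all x ∈ ℝ, and f satisfies the Stein equation f'(x) = x·f(x) + h(x) − E[h(N)] for all x ∈ ℝ. -/

import Mathlib

open MeasureTheory ProbabilityTheory Real Set Filter
open scoped NNReal ENNReal

lemma stein_int_exp : Integrable (fun a : ℝ => rexp (-a ^ 2 / 2)) := by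
  have := integrable_exp_neg_mul_sq (b := (1:ℝ)/2) (by norm_num)
  convert this using 2 with a
  ring_nf

lemma stein_int_exp_val : ∫ a : ℝ, rexp (-a ^ 2 / 2) = Real.sqrt (2 * π) := by
  have := integral_gaussian ((1:ℝ)/2)
  rw [show π / (1/2 : ℝ) = 2 * π by ring] at this
  rw [← this]
  congr 1 with a
  ring_nf

lemma stein_int_exp_Ioi_zero : ∫ a in Ioi (0:ℝ), rexp (-a ^ 2 / 2) = Real.sqrt (π / 2) := by
  have := integral_gaussian_Ioi ((1:ℝ)/2)
  have h2 : ∫ a in Ioi (0:ℝ), rexp (-a ^ 2 / 2) = √(π / (1/2)) / 2 := by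
    rw [← this]; congr 1 with a; ring_nf
  rw [h2, show π / (1/2 : ℝ) = 2 * π by ring]
  rw [show (2*π : ℝ) = (π/2)*2^2 by ring, Real.sqrt_mul (by positivity), Real.sqrt_sq (by norm_num)]
  ring

lemma stein_tendsto : Tendsto (fun a : ℝ => -rexp (-a ^ 2 / 2)) atTop (nhds 0) := by
  rw [show (0:ℝ) = -0 by norm_num]
  apply Tendsto.neg
  apply Real.tendsto_exp_atBot.comp
  apply Tendsto.atBot_div_const (by norm_num)
  exact tendsto_neg_atBot_iff.mpr (tendsto_pow_atTop (by norm_num))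

lemma stein_hasDeriv (a : ℝ) :
    HasDerivAt (fun a : ℝ => -rexp (-a ^ 2 / 2)) (a * rexp (-a ^ 2 / 2)) a := by
  have h1 : HasDerivAt (fun a : ℝ => -a ^ 2 / 2) (-a) a := by
    have := ((hasDerivAt_pow 2 a).neg).div_const 2
    simp only [Pi.neg_def, Pi.neg_apply] at this
    refine this.congr_deriv ?_
    push_cast; ring
  have := ((h1.exp).neg)
  simp only [Pi.neg_def, Pi.neg_apply] at this
  refine this.congr_deriv ?_
  ring

lemma stein_int_mul : Integrable (fun a : ℝ => a * rexp (-a ^ 2 / 2)) := by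
  have := integrable_mul_exp_neg_mul_sq (b := (1:ℝ)/2) (by norm_num)
  convert this using 2 with a
  ring_nf

lemma stein_tail_mul (x : ℝ) :
    ∫ a in Ioi x, a * rexp (-a ^ 2 / 2) = rexp (-x ^ 2 / 2) := by
  have := integral_Ioi_of_hasDerivAt_of_tendsto' (f := fun a : ℝ => -rexp (-a ^ 2 / 2))
    (f' := fun a : ℝ => a * rexp (-a ^ 2 / 2)) (a := x)
    (fun y _ => stein_hasDeriv y) stein_int_mul.integrableOn stein_tendsto
  rw [this]; ring

/-- K2 : tail bound -/
lemma stein_tail_le {x : ℝ} (hx : 0 < x) :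
    ∫ a in Ioi x, rexp (-a ^ 2 / 2) ≤ rexp (-x ^ 2 / 2) / x := by
  have h1 : ∫ a in Ioi x, rexp (-a ^ 2 / 2) ≤ ∫ a in Ioi x, (a / x) * rexp (-a ^ 2 / 2) := by
    apply setIntegral_mono_on
    · exact stein_int_exp.integrableOn
    · have := (stein_int_mul.integrableOn (s := Ioi x)).div_const x
      exact this.congr (Eventually.of_forall (fun a => by ring))
    · exact measurableSet_Ioi
    · intro a ha
      have hax : x ≤ a := le_of_lt ha
      nth_rewrite 1 [show rexp (-a ^ 2 / 2) = 1 * rexp (-a ^ 2 / 2) by ring]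
      apply mul_le_mul_of_nonneg_right _ (Real.exp_nonneg _)
      rw [le_div_iff₀ hx]; linarith
  have h2 : ∫ a in Ioi x, (a / x) * rexp (-a ^ 2 / 2) = rexp (-x ^ 2 / 2) / x := by
    have : ∀ a : ℝ, (a / x) * rexp (-a ^ 2 / 2) = x⁻¹ * (a * rexp (-a ^ 2 / 2)) := by
      intro a; field_simp
    simp_rw [this, integral_const_mul, stein_tail_mul x]
    field_simp
  linarith [h1, h2.le]

lemma stein_shift (x : ℝ) (F : ℝ → ℝ) :
    ∫ a in Ioi x, F a = ∫ t in Ioi (0:ℝ), F (t + x) := by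
  have A : MeasurableEmbedding (fun t : ℝ => t + x) :=
    (Homeomorph.addRight x).isClosedEmbedding.measurableEmbedding
  have hmap : Measure.map (fun t : ℝ => t + x) volume = volume :=
    map_add_right_eq_self volume x
  have h2 := A.setIntegral_map (μ := volume) F (Ioi x)
  rw [hmap] at h2
  rw [h2]
  congr 1
  ext t
  simp

/-- K1 : bounded tail times exp -/
lemma stein_K1 {x : ℝ} (hx : 0 ≤ x) :
    rexp (x ^ 2 / 2) * ∫ a in Ioi x, rexp (-a ^ 2 / 2) ≤ Real.sqrt (π / 2) := by
  rw [stein_shift x, ← integral_const_mul]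
  have hb : ∀ t : ℝ, rexp (x ^ 2 / 2) * rexp (-(t + x) ^ 2 / 2)
      = rexp (-t * x) * rexp (-t ^ 2 / 2) := by
    intro t
    rw [← Real.exp_add, ← Real.exp_add]
    congr 1
    ring
  have hle : ∫ t in Ioi (0:ℝ), rexp (x ^ 2 / 2) * rexp (-(t + x) ^ 2 / 2)
      ≤ ∫ t in Ioi (0:ℝ), rexp (-t ^ 2 / 2) := by
    apply setIntegral_mono_on
    · exact ((stein_int_exp.comp_add_right x).const_mul (rexp (x ^ 2 / 2))).integrableOn
    · exact stein_int_exp.integrableOn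
    · exact measurableSet_Ioi
    · intro t ht
      rw [hb t]
      nth_rewrite 2 [show rexp (-t ^ 2 / 2) = 1 * rexp (-t ^ 2 / 2) by ring]
      apply mul_le_mul_of_nonneg_right _ (Real.exp_nonneg _)
      rw [Real.exp_le_one_iff]
      have := le_of_lt (Set.mem_Ioi.mp ht)
      nlinarith
  calc _ ≤ ∫ t in Ioi (0:ℝ), rexp (-t ^ 2 / 2) := hle
    _ = Real.sqrt (π / 2) := stein_int_exp_Ioi_zero

lemma stein_gaussian_integral (h : ℝ → ℝ) :
    ∫ y, h y ∂(gaussianReal 0 1) = (Real.sqrt (2 * π))⁻¹ * ∫ a, h a * rexp (-a ^ 2 / 2) := by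
  rw [gaussianReal_of_var_ne_zero 0 one_ne_zero]
  rw [gaussianPDF_def]
  have : ∀ a : ℝ, ENNReal.ofReal (gaussianPDFReal 0 1 a)
      = ((Real.toNNReal (gaussianPDFReal 0 1 a) : ℝ≥0) : ℝ≥0∞) := fun a => rfl
  simp_rw [this]
  rw [integral_withDensity_eq_integral_smul
    (by exact (measurable_gaussianPDFReal 0 1).real_toNNReal)]
  rw [← integral_const_mul]
  congr 1 with a
  have h0 : (0:ℝ) ≤ gaussianPDFReal 0 1 a := gaussianPDFReal_nonneg 0 1 a
  rw [NNReal.smul_def, smul_eq_mul, Real.coe_toNNReal _ h0]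
  unfold gaussianPDFReal
  push_cast
  rw [mul_one]
  ring_nf

theorem stein_lemma (h : ℝ → ℝ) (hcont : Continuous h)
    (hrange : ∀ x, h x ∈ Icc (0 : ℝ) 1) :
    ∀ f : ℝ → ℝ,
      (f = fun x => Real.exp (x ^ 2 / 2) *
        ∫ a in Iio x, (h a - ∫ y, h y ∂(gaussianReal 0 1)) * Real.exp (-a ^ 2 / 2)) →
      ContDiff ℝ 1 f ∧
      (∀ x, |f x| ≤ Real.sqrt (π / 2)) ∧
      (∀ x, |deriv f x| ≤ 2) ∧
      (∀ x, deriv f x = x * f x + h x - ∫ y, h y ∂(gaussianReal 0 1)) := by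
  intro f hf
  set c : ℝ := ∫ y, h y ∂(gaussianReal 0 1) with hc
  set g : ℝ → ℝ := fun a => (h a - c) * rexp (-a ^ 2 / 2) with hgdef
  set G : ℝ → ℝ := fun u => ∫ a in Iio u, g a with hGdef
  have hfG : ∀ x, f x = rexp (x ^ 2 / 2) * G x := by
    intro x; rw [hf]
  -- basic facts about c
  have hc1 : 0 ≤ c := integral_nonneg fun y => (hrange y).1
  have hIntc : Integrable h (gaussianReal 0 1) := by
    apply Integrable.mono' (integrable_const 1) hcont.aestronglyMeasurable
    filter_upwards with a
    rw [Real.norm_eq_abs, abs_of_nonneg (hrange a).1]; exact (hrange a).2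
  have hc2 : c ≤ 1 := by
    calc c ≤ ∫ _y, (1:ℝ) ∂(gaussianReal 0 1) :=
          integral_mono hIntc (integrable_const 1) (fun y => (hrange y).2)
      _ = 1 := by simp
  -- integrability and bounds of g
  have hec : Continuous (fun a : ℝ => rexp (-a ^ 2 / 2)) :=
    by fun_prop
  have hgc : Continuous g := (hcont.sub continuous_const).mul hec
  have habs : ∀ a, ‖g a‖ ≤ rexp (-a ^ 2 / 2) := by
    intro a
    rw [hgdef]
    simp only [Real.norm_eq_abs, abs_mul, abs_of_nonneg (Real.exp_nonneg _)]
    nth_rewrite 2 [← one_mul (rexp _)]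
    apply mul_le_mul_of_nonneg_right _ (Real.exp_nonneg _)
    rw [abs_le]
    constructor <;> [linarith [(hrange a).1, hc2]; linarith [(hrange a).2, hc1]]
  have hgi : Integrable g :=
    stein_int_exp.mono' hgc.aestronglyMeasurable (Eventually.of_forall habs)
  have hhe : Integrable (fun a => h a * rexp (-a ^ 2 / 2)) := by
    apply stein_int_exp.mono' (hcont.mul hec).aestronglyMeasurable
    filter_upwards with a
    simp only [Pi.mul_apply]
    rw [Real.norm_eq_abs, abs_mul, abs_of_nonneg (hrange a).1,
      abs_of_nonneg (Real.exp_nonneg _)]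
    nth_rewrite 2 [← one_mul (rexp _)]
    exact mul_le_mul_of_nonneg_right (hrange a).2 (Real.exp_nonneg _)
  -- total integral of g is zero
  have htot : ∫ a, g a = 0 := by
    have h1 : ∫ a, g a = (∫ a, h a * rexp (-a ^ 2 / 2)) - c * ∫ a, rexp (-a ^ 2 / 2) := by
      have : ∀ a, g a = h a * rexp (-a ^ 2 / 2) - c * rexp (-a ^ 2 / 2) := by
        intro a; rw [hgdef]; ring
      simp_rw [this]
      rw [integral_sub hhe (stein_int_exp.const_mul c), integral_const_mul]
    have h2 := stein_gaussian_integral h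
    rw [← hc] at h2
    have hπ : (0:ℝ) < Real.sqrt (2 * π) := by positivity
    rw [h1, stein_int_exp_val]
    rw [h2]
    field_simp
    ring
  -- FTC : derivative of G
  have hG : ∀ x : ℝ, HasDerivAt G (g x) x := by
    intro x
    have heq : G = fun u => (∫ a in Iic (0:ℝ), g a) + ∫ a in (0:ℝ)..u, g a := by
      funext u
      rw [hGdef]
      simp only
      rw [← integral_Iic_eq_integral_Iio,
        ← intervalIntegral.integral_Iic_sub_Iic hgi.integrableOn hgi.integrableOn]
      ring
    rw [heq]
    have := intervalIntegral.integral_hasDerivAt_right (a := (0:ℝ)) (b := x)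
      hgi.intervalIntegrable (hgc.stronglyMeasurableAtFilter _ _) hgc.continuousAt
    exact this.const_add _
  -- derivative of f
  have hf' : ∀ x, HasDerivAt f (x * f x + (h x - c)) x := by
    intro x
    have h1 : HasDerivAt (fun u : ℝ => u ^ 2 / 2) x x := by
      have := (hasDerivAt_pow 2 x).div_const 2
      refine this.congr_deriv ?_
      push_cast; ring
    have he : HasDerivAt (fun u : ℝ => rexp (u ^ 2 / 2)) (x * rexp (x ^ 2 / 2)) x := by
      have := h1.exp
      convert this using 1
      ring
    have hprod := he.mul (hG x)
    simp only [Pi.mul_def] at hprod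
    have hfun : f = fun u => rexp (u ^ 2 / 2) * G u := funext hfG
    rw [hfun]
    refine hprod.congr_deriv ?_
    have hexp : rexp (x ^ 2 / 2) * rexp (-x ^ 2 / 2) = 1 := by
      rw [← Real.exp_add, show x ^ 2 / 2 + -x ^ 2 / 2 = 0 by ring, Real.exp_zero]
    have hgx : rexp (x ^ 2 / 2) * g x = h x - c := by
      rw [hgdef]
      simp only
      calc rexp (x ^ 2 / 2) * ((h x - c) * rexp (-x ^ 2 / 2))
          = (h x - c) * (rexp (x ^ 2 / 2) * rexp (-x ^ 2 / 2)) := by ring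
        _ = h x - c := by rw [hexp]; ring
    beta_reduce
    nlinarith [hgx]
  have hderiv : ∀ x, deriv f x = x * f x + h x - c := by
    intro x
    rw [(hf' x).deriv]; ring
  have hdiff : Differentiable ℝ f := fun x => (hf' x).differentiableAt
  have hfc : Continuous f := hdiff.continuous
  have hdc : Continuous (deriv f) := by
    have : deriv f = fun x => x * f x + h x - c := funext hderiv
    rw [this]
    exact ((continuous_id.mul hfc).add hcont).sub continuous_const
  -- central bound on |G|
  have hGb : ∀ x : ℝ, |G x| ≤ ∫ a in Ioi |x|, rexp (-a ^ 2 / 2) := by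
    intro x
    have key : ∀ s : Set ℝ, MeasurableSet s → |∫ a in s, g a| ≤ ∫ a in s, rexp (-a ^ 2 / 2) := by
      intro s hs
      calc |∫ a in s, g a| ≤ ∫ a in s, ‖g a‖ := norm_integral_le_integral_norm g
        _ ≤ ∫ a in s, rexp (-a ^ 2 / 2) :=
          setIntegral_mono_on hgi.norm.integrableOn stein_int_exp.integrableOn hs
            (fun a _ => habs a)
    rcases le_or_gt 0 x with hx | hx
    · have hsplit : (∫ a in Iio x, g a) + ∫ a in Ici x, g a = ∫ a, g a :=
        intervalIntegral.integral_Iio_add_Ici hgi.integrableOn hgi.integrableOn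
      rw [htot] at hsplit
      have hGx : G x = -∫ a in Ici x, g a := by
        rw [hGdef]; simp only; linarith
      rw [hGx, abs_neg, abs_of_nonneg hx]
      calc |∫ a in Ici x, g a| ≤ ∫ a in Ici x, rexp (-a ^ 2 / 2) := key _ measurableSet_Ici
        _ = ∫ a in Ioi x, rexp (-a ^ 2 / 2) := integral_Ici_eq_integral_Ioi
    · have h1 : |G x| ≤ ∫ a in Iio x, rexp (-a ^ 2 / 2) := key _ measurableSet_Iio
      have h2 : ∫ a in Iio x, rexp (-a ^ 2 / 2) = ∫ a in Ioi (-x), rexp (-a ^ 2 / 2) := by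
        have h3 := integral_comp_neg_Ioi (-x) (fun a => rexp (-a ^ 2 / 2))
        simp only [neg_sq, neg_neg] at h3
        rw [h3, integral_Iic_eq_integral_Iio]
      rw [abs_of_neg hx]
      rw [h2] at h1
      exact h1
  -- |f| bound
  have hfb : ∀ x, |f x| ≤ Real.sqrt (π / 2) := by
    intro x
    rw [hfG x, abs_mul, abs_of_nonneg (Real.exp_nonneg _)]
    calc rexp (x ^ 2 / 2) * |G x|
        ≤ rexp (x ^ 2 / 2) * ∫ a in Ioi |x|, rexp (-a ^ 2 / 2) :=
          mul_le_mul_of_nonneg_left (hGb x) (Real.exp_nonneg _)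
      _ = rexp (|x| ^ 2 / 2) * ∫ a in Ioi |x|, rexp (-a ^ 2 / 2) := by rw [sq_abs]
      _ ≤ Real.sqrt (π / 2) := stein_K1 (abs_nonneg x)
  -- |x f x| bound
  have hxfb : ∀ x, |x * f x| ≤ 1 := by
    intro x
    rcases eq_or_ne x 0 with rfl | hx
    · simp
    · have hxpos : 0 < |x| := abs_pos.mpr hx
      rw [abs_mul, hfG x, abs_mul, abs_of_nonneg (Real.exp_nonneg _)]
      have step : rexp (x ^ 2 / 2) * |G x| ≤ rexp (x ^ 2 / 2) * (rexp (-x ^ 2 / 2) / |x|) := by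
        apply mul_le_mul_of_nonneg_left _ (Real.exp_nonneg _)
        calc |G x| ≤ ∫ a in Ioi |x|, rexp (-a ^ 2 / 2) := hGb x
          _ ≤ rexp (-|x| ^ 2 / 2) / |x| := stein_tail_le hxpos
          _ = rexp (-x ^ 2 / 2) / |x| := by rw [sq_abs]
      calc |x| * (rexp (x ^ 2 / 2) * |G x|)
          ≤ |x| * (rexp (x ^ 2 / 2) * (rexp (-x ^ 2 / 2) / |x|)) :=
            mul_le_mul_of_nonneg_left step (abs_nonneg x)
        _ = rexp (x ^ 2 / 2) * rexp (-x ^ 2 / 2) := by field_simp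
        _ = 1 := by rw [← Real.exp_add, show x ^ 2 / 2 + -x ^ 2 / 2 = 0 by ring, Real.exp_zero]
  refine ⟨?_, hfb, ?_, hderiv⟩
  · rw [contDiff_one_iff_deriv]
    exact ⟨hdiff, hdc⟩
  · intro x
    rw [hderiv x]
    have h1 : |h x - c| ≤ 1 := by
      rw [abs_le]
      constructor <;> [linarith [(hrange x).1, hc2]; linarith [(hrange x).2, hc1]]
    calc |x * f x + h x - c| = |x * f x + (h x - c)| := by ring_nf
      _ ≤ |x * f x| + |h x - c| := abs_add_le _ _
      _ ≤ 1 + 1 := add_le_add (hxfb x) h1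
      _ = 2 := by norm_num
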